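/- Let a, b > 0. Define the sequence s_0 = a and s_{k+1} = a + b/s_k (the finite generalized continued fractions). Then s_k converges to φ(a,b) = (a + √(a² + 4b))/2 as k → ∞. -/

import Mathlib

theorem gen_cont_frac_tendsto (a b : ℝ) (ha : 0 < a) (hb : 0 < b) (s : ℕ → ℝ)
    (h0 : s 0 = a) (hrec : ∀ k, s (k + 1) = a + b / s k) :
    Filter.Tendsto s Filter.atTop
      (nhds ((a + Real.sqrt (a ^ 2 + 4 * b)) / 2)) := by
  set c := Real.sqrt (a ^ 2 + 4 * b) with hc
  have hc2 : c ^ 2 = a ^ 2 + 4 * b := Real.sq_sqrt (by positivity)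
  set φ := (a + c) / 2 with hφdef
  have hcpos : 0 < c := Real.sqrt_pos.mpr (by positivity)
  have hca : a < c := by nlinarith
  have hφa : a < φ := by rw [hφdef]; linarith
  have hφpos : 0 < φ := lt_trans ha hφa
  have hφeq : φ ^ 2 = a * φ + b := by rw [hφdef]; nlinarith
  have hpos : ∀ k, a ≤ s k := by
    intro k
    induction k with
    | zero => rw [h0]
    | succ n ih =>
      have hsn : 0 < s n := lt_of_lt_of_le ha ih
      have : 0 < b / s n := div_pos hb hsn
      rw [hrec]; linarith
  have hspos : ∀ k, 0 < s k := fun k => lt_of_lt_of_le ha (hpos k)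
  clear_value c
  have hfix : a + b / φ = φ := by
    rw [hφdef]
    field_simp
    nlinarith
  clear_value φ
  have hstep : ∀ k, |s (k + 1) - φ| = b / (s k * φ) * |s k - φ| := by
    intro k
    have h1 : s (k + 1) - φ = b / (s k * φ) * (φ - s k) := by
      rw [hrec, div_mul_eq_mul_div, eq_div_iff (mul_pos (hspos k) hφpos).ne']
      field_simp [(hspos k).ne']
      linear_combination (-(s k)) * hφeq
    rw [h1, abs_mul, abs_of_pos (div_pos hb (mul_pos (hspos k) hφpos)), abs_sub_comm]
  set q := b / (a ^ 2 + b) with hqdef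
  have hq0 : 0 < q := by positivity
  have hq1 : q < 1 := by
    rw [hqdef, div_lt_one (by positivity)]; nlinarith
  have key : ∀ k, |s (k + 2) - φ| ≤ q * |s k - φ| := by
    intro k
    have hD : a ^ 2 + b ≤ s (k + 1) * s k := by
      have := hpos k
      have hsk := hspos k
      rw [hrec]
      field_simp
      nlinarith
    have hφ2 : b ≤ φ ^ 2 := by nlinarith
    have h2 : |s (k + 2) - φ| = b / (s (k + 1) * φ) * (b / (s k * φ)) * |s k - φ| := by
      rw [hstep (k + 1), hstep k]; ring
    rw [h2]
    apply mul_le_mul_of_nonneg_right _ (abs_nonneg _)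
    have hden : (a ^ 2 + b) * b ≤ (s (k + 1) * s k) * φ ^ 2 := by
      exact mul_le_mul hD hφ2 hb.le (mul_pos (hspos (k + 1)) (hspos k)).le
    rw [div_mul_div_comm, hqdef]
    rw [div_le_div_iff₀ (mul_pos (mul_pos (hspos (k + 1)) hφpos) (mul_pos (hspos k) hφpos)) (by positivity)]
    calc b * b * (a ^ 2 + b) = b * ((a ^ 2 + b) * b) := by ring
      _ ≤ b * ((s (k + 1) * s k) * φ ^ 2) := by
          exact mul_le_mul_of_nonneg_left hden hb.le
      _ = b * (s (k + 1) * φ * (s k * φ)) := by ring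
  set r := Real.sqrt q with hrdef
  have hr0 : 0 < r := Real.sqrt_pos.mpr hq0
  have hr1 : r < 1 := by
    rw [hrdef]
    calc Real.sqrt q < Real.sqrt 1 := by
          exact Real.sqrt_lt_sqrt hq0.le hq1
      _ = 1 := Real.sqrt_one
  have hr2 : r ^ 2 = q := Real.sq_sqrt hq0.le
  set M := max (|s 0 - φ|) (|s 1 - φ| / r) with hM
  have hM0 : |s 0 - φ| ≤ M := le_max_left _ _
  have hM1 : |s 1 - φ| ≤ M * r := by
    rw [← div_le_iff₀ hr0]
    exact le_max_right _ _
  have bound : ∀ n, |s n - φ| ≤ M * r ^ n := by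
    intro n
    induction n using Nat.strong_induction_on with
    | _ n ih =>
      match n with
      | 0 => simpa using hM0
      | 1 => simpa using hM1
      | (m + 2) =>
        have h1 := key m
        have h2 := ih m (by omega)
        calc |s (m + 2) - φ| ≤ q * |s m - φ| := h1
          _ ≤ q * (M * r ^ m) := mul_le_mul_of_nonneg_left h2 hq0.le
          _ = M * r ^ (m + 2) := by rw [← hr2]; ring
  have hgeo : Filter.Tendsto (fun n : ℕ => M * r ^ n) Filter.atTop (nhds 0) := by
    have := (tendsto_pow_atTop_nhds_zero_of_lt_one hr0.le hr1).const_mul M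
    simpa using this
  have hdiff : Filter.Tendsto (fun n => s n - φ) Filter.atTop (nhds 0) :=
    squeeze_zero_norm (fun n => by simpa [Real.norm_eq_abs] using bound n) hgeo
  have := hdiff.add_const φ
  simpa using this
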